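/- If a word w 12-represents a labeled cycle C_n (n ≥ 5) with vertices labeled v₀ = 1, v₁, …, v_{n−1} in cyclic order, then the sequence of labels must alternate: 1 < v₁ > v₂ < v₃ > ⋯, i.e., consecutive labels around the cycle alternately rise and fall. In particular, C_n with n odd and n ≥ 5 admits no 12-representation. -/

import Mathlib

/-- A word has no 12-match iff no two consecutive letters form a strictly
increasing pair, i.e. the word is weakly decreasing at each step. -/
def NoMatch12 (w : List ℕ) : Prop := w.Chain' (fun a b => b ≤ a)

/-- `w` 12-represents the labeled graph with vertex set `V ⊂ ℕ` and edge relation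
`E`: every vertex occurs in `w`, all letters of `w` are vertices, and for all
distinct vertices `x, y`: `xy` is an edge iff the subsequence of `w` consisting of
occurrences of `x` and `y` has no 12-match. -/
def Rep12 (V : Finset ℕ) (E : ℕ → ℕ → Prop) (w : List ℕ) : Prop :=
  (∀ v ∈ V, v ∈ w) ∧ (∀ a ∈ w, a ∈ V) ∧
    ∀ x ∈ V, ∀ y ∈ V, x ≠ y →
      (E x y ↔ NoMatch12 (w.filter (fun a => a = x ∨ a = y)))

/-- If `x < y < z`, `xy` and `yz` are edges of a 12-represented graph, then `xz`
is an edge: an induced path on `{x,y,z}` with middle vertex `y` strictly between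
the endpoints is forbidden. -/
lemma forbidden12 {V : Finset ℕ} {E : ℕ → ℕ → Prop} {w : List ℕ}
    (h : Rep12 V E w) {x y z : ℕ} (hx : x ∈ V) (hy : y ∈ V) (hz : z ∈ V)
    (hxy : x < y) (hyz : y < z) (exy : E x y) (eyz : E y z) : E x z := by
  obtain ⟨hall, -, hiff⟩ := h
  haveI : IsTrans ℕ (fun a b => b ≤ a) := ⟨fun a b c h1 h2 => le_trans h2 h1⟩
  have H1 := List.pairwise_iff_getElem.mp (List.pairwise_filter.mp
    (List.isChain_iff_pairwise.mp ((hiff x hx y hy hxy.ne).mp exy)))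
  have H2 := List.pairwise_iff_getElem.mp (List.pairwise_filter.mp
    (List.isChain_iff_pairwise.mp ((hiff y hy z hz hyz.ne).mp eyz)))
  refine (hiff x hx z hz (hxy.trans hyz).ne).mpr ?_
  unfold NoMatch12
  rw [List.Chain', List.isChain_iff_pairwise, List.pairwise_filter, List.pairwise_iff_getElem]
  intro i j hi hj hij pi pj
  simp only [decide_eq_true_eq] at pi pj H1 H2
  obtain ⟨k, hk, hky⟩ := List.mem_iff_getElem.mp (hall y hy)
  rcases pi with pix | piz
  · rcases pj with pjx | pjz
    · omega
    · -- hard case : x occurs before z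
      exfalso
      rcases lt_trichotomy i k with hik | hik | hik
      · have := H1 i k hi hk hik (Or.inl pix) (Or.inr hky); omega
      · subst hik; rw [pix] at hky; omega
      · have := H2 k j hk hj (hik.trans hij) (Or.inl hky) (Or.inr pjz); omega
  · rcases pj with pjx | pjz <;> omega

theorem stmt_13 (n : ℕ) (hn : 5 ≤ n) (v : ℕ → ℕ)
    (hv : ∀ a < n, ∀ b < n, v a = v b → a = b)
    (hpos : ∀ i < n, 0 < v i) (h0 : v 0 = 1)
    (w : List ℕ)
    (hrep : Rep12 (Finset.image v (Finset.range n))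
      (fun a b => ∃ t < n,
        (a = v t ∧ b = v ((t + 1) % n)) ∨ (b = v t ∧ a = v ((t + 1) % n)))
      w) :
    (∀ t, t + 1 < n → (Even t → v t < v (t + 1)) ∧ (Odd t → v (t + 1) < v t)) ∧
      v 0 < v (n - 1) ∧ ¬ Odd n := by
  have npos : 0 < n := by omega
  have hmem : ∀ i, i < n → v i ∈ Finset.image v (Finset.range n) :=
    fun i hi => Finset.mem_image.mpr ⟨i, Finset.mem_range.mpr hi, rfl⟩
  have hne : ∀ i, i < n → ∀ j, j < n → i ≠ j → v i ≠ v j :=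
    fun i hi j hj hij he => hij (hv i hi j hj he)
  -- an edge forces adjacency of the indices
  have adj : ∀ i, i < n → ∀ j, j < n →
      (∃ t, t < n ∧ ((v i = v t ∧ v j = v ((t + 1) % n)) ∨
        (v j = v t ∧ v i = v ((t + 1) % n)))) →
      j = (i + 1) % n ∨ i = (j + 1) % n := by
    rintro i hi j hj ⟨t, ht, (⟨h1, h2⟩ | ⟨h1, h2⟩)⟩
    · left
      have e1 : i = t := hv i hi t ht h1
      have e2 : j = (t + 1) % n := hv j hj _ (Nat.mod_lt _ npos) h2
      rw [e1]; exact e2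
    · right
      have e1 : j = t := hv j hj t ht h1
      have e2 : i = (t + 1) % n := hv i hi _ (Nat.mod_lt _ npos) h2
      rw [e1]; exact e2
  -- the key step: a middle vertex of an induced path can't be strictly between
  have key : ∀ a b c, a < n → b < n → c < n →
      (b = (a + 1) % n ∨ a = (b + 1) % n) → (c = (b + 1) % n ∨ b = (c + 1) % n) →
      ¬(c = (a + 1) % n ∨ a = (c + 1) % n) →
      ¬(v a < v b ∧ v b < v c) := by
    rintro a b c ha hb hc hab hbc hnac ⟨l1, l2⟩
    have exy : ∃ t, t < n ∧ ((v a = v t ∧ v b = v ((t + 1) % n)) ∨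
        (v b = v t ∧ v a = v ((t + 1) % n))) := by
      rcases hab with h | h
      · exact ⟨a, ha, Or.inl ⟨rfl, by rw [← h]⟩⟩
      · exact ⟨b, hb, Or.inr ⟨rfl, by rw [← h]⟩⟩
    have eyz : ∃ t, t < n ∧ ((v b = v t ∧ v c = v ((t + 1) % n)) ∨
        (v c = v t ∧ v b = v ((t + 1) % n))) := by
      rcases hbc with h | h
      · exact ⟨b, hb, Or.inl ⟨rfl, by rw [← h]⟩⟩
      · exact ⟨c, hc, Or.inr ⟨rfl, by rw [← h]⟩⟩
    have exz := forbidden12 hrep (hmem a ha) (hmem b hb) (hmem c hc) l1 l2 exy eyz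
    exact hnac (adj a ha c hc exz)
  -- arithmetic: indices at cyclic distance 2 are not adjacent
  have nad : ∀ a, a + 2 < n → a + 2 ≠ (a + 1) % n ∧ a ≠ (a + 3) % n := by
    intro a ha
    constructor
    · rw [Nat.mod_eq_of_lt (by omega)]; omega
    · rcases Nat.lt_or_ge (a + 3) n with h | h
      · rw [Nat.mod_eq_of_lt h]; omega
      · rw [show a + 3 = n from by omega, Nat.mod_self]; omega
  -- the alternation, by induction
  have alt : ∀ t, t + 1 < n → (Even t → v t < v (t + 1)) ∧ (Odd t → v (t + 1) < v t) := by
    intro t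
    induction t with
    | zero =>
      intro h
      constructor
      · intro _
        have h1 : v 1 ≠ v 0 := hne 1 (by omega) 0 (by omega) (by omega)
        rw [h0] at h1
        have h2 : 0 < v 1 := hpos 1 (by omega)
        show v 0 < v 1
        rw [h0]
        omega
      · intro hodd
        rw [Nat.odd_iff] at hodd; omega
    | succ t ih =>
      intro h
      have ih' := ih (by omega)
      have m1 : (t + 1) % n = t + 1 := Nat.mod_eq_of_lt (by omega)
      have m2 : (t + 1 + 1) % n = t + 2 := Nat.mod_eq_of_lt (by omega)
      have hnad := nad t (by omega)
      rcases Nat.even_or_odd t with he | ho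
      · have l1 : v t < v (t + 1) := ih'.1 he
        have hlt : v (t + 2) < v (t + 1) := by
          have hne' : v (t + 1) ≠ v (t + 2) :=
            hne (t + 1) (by omega) (t + 2) (by omega) (by omega)
          by_contra hcon
          push_neg at hcon
          have l2 : v (t + 1) < v (t + 2) := lt_of_le_of_ne hcon hne'
          exact key t (t + 1) (t + 2) (by omega) (by omega) (by omega)
            (Or.inl m1.symm) (Or.inl (by rw [m2]))
            (by
              rintro (h' | h')
              · exact hnad.1 h'
              · have e3 : t + 2 + 1 = t + 3 := by omega
                rw [e3] at h'
                exact hnad.2 h')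
            ⟨l1, l2⟩
        constructor
        · intro hev
          have e1 := Nat.even_iff.mp he
          have e2 := Nat.even_iff.mp hev
          omega
        · intro _
          exact hlt
      · have l1 : v (t + 1) < v t := ih'.2 ho
        have hlt : v (t + 1) < v (t + 2) := by
          have hne' : v (t + 2) ≠ v (t + 1) :=
            hne (t + 2) (by omega) (t + 1) (by omega) (by omega)
          by_contra hcon
          push_neg at hcon
          have l2 : v (t + 2) < v (t + 1) := lt_of_le_of_ne hcon hne'
          exact key (t + 2) (t + 1) t (by omega) (by omega) (by omega)
            (Or.inr (by rw [m2])) (Or.inr m1.symm)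
            (by
              rintro (h' | h')
              · have e3 : t + 2 + 1 = t + 3 := by omega
                rw [e3] at h'
                exact hnad.2 h'
              · exact hnad.1 h')
            ⟨l2, l1⟩
        constructor
        · intro _
          exact hlt
        · intro hodd
          have e1 := Nat.odd_iff.mp ho
          have e2 := Nat.odd_iff.mp hodd
          omega
  have hmin : v 0 < v (n - 1) := by
    have h1 : v (n - 1) ≠ v 0 := hne (n - 1) (by omega) 0 (by omega) (by omega)
    rw [h0] at h1
    have h2 : 0 < v (n - 1) := hpos (n - 1) (by omega)
    rw [h0]
    omega
  refine ⟨alt, hmin, ?_⟩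
  intro hO
  have hodd' : Odd (n - 2) := by
    rw [Nat.odd_iff] at hO ⊢; omega
  have l2 : v (n - 1) < v (n - 2) := by
    have := (alt (n - 2) (by omega)).2 hodd'
    rwa [show n - 2 + 1 = n - 1 from by omega] at this
  refine key 0 (n - 1) (n - 2) (by omega) (by omega) (by omega) ?_ ?_ ?_ ⟨hmin, l2⟩
  · right
    rw [show n - 1 + 1 = n from by omega, Nat.mod_self]
  · right
    rw [Nat.mod_eq_of_lt (by omega)]
    omega
  · rintro (h' | h')
    · rw [Nat.mod_eq_of_lt (by omega)] at h'; omega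
    · rw [show n - 2 + 1 = n - 1 from by omega, Nat.mod_eq_of_lt (by omega)] at h'; omega
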